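/- Let A be a row circular binary matrix satisfying the standard assumptions. If the joint saturation graph of two distinct vertices v and v' of Q*(A) has no edges, then v and v' are not adjacent in Q*(A). -/

import Mathlib

open Finset

/-- Support of a vector. -/
def supp {n : ℕ} (x : Fin n → ℝ) : Set (Fin n) := {j | x j ≠ 0}

/-- Support of the `t`-th row of a matrix. -/
def rowSupp {m n : ℕ} (A : Matrix (Fin m) (Fin n) ℝ) (t : Fin m) : Set (Fin n) :=
  {j | A t j ≠ 0}

def IsBinaryMatrix {m n : ℕ} (A : Matrix (Fin m) (Fin n) ℝ) : Prop :=
  ∀ t j, A t j = 0 ∨ A t j = 1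

def IsBinaryVec {n : ℕ} (x : Fin n → ℝ) : Prop := ∀ j, x j = 0 ∨ x j = 1

/-- The polyhedron `{x | A x ≥ b, x ≥ 0}`. -/
def polyP {m n : ℕ} (A : Matrix (Fin m) (Fin n) ℝ) (b : Fin m → ℝ) : Set (Fin n → ℝ) :=
  {x | (∀ i, b i ≤ ∑ j, A i j * x j) ∧ ∀ j, 0 ≤ x j}

/-- The linear relaxation `Q(A) = {x | A x ≥ 1, x ≥ 0}`. -/
def polyQ {m n : ℕ} (A : Matrix (Fin m) (Fin n) ℝ) : Set (Fin n → ℝ) :=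
  {x | (∀ i, 1 ≤ ∑ j, A i j * x j) ∧ ∀ j, 0 ≤ x j}

/-- The set covering polyhedron `Q*(A)`: convex hull of nonnegative integer solutions of
`A x ≥ 1`. -/
def Qstar {m n : ℕ} (A : Matrix (Fin m) (Fin n) ℝ) : Set (Fin n → ℝ) :=
  convexHull ℝ {x | (∀ j, ∃ k : ℕ, x j = k) ∧ ∀ i, 1 ≤ ∑ j, A i j * x j}

/-- A vertex of a convex set is an extreme point. -/
def IsVertex {n : ℕ} (S : Set (Fin n → ℝ)) (v : Fin n → ℝ) : Prop :=
  v ∈ S.extremePoints ℝ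

/-- Two distinct vertices are adjacent when they lie on a common edge, i.e. the segment
joining them is a face (extreme subset) of `S`. -/
def AdjacentVerts {n : ℕ} (S : Set (Fin n → ℝ)) (v w : Fin n → ℝ) : Prop :=
  v ≠ w ∧ IsVertex S v ∧ IsVertex S w ∧ IsExtreme ℝ S (segment ℝ v w)

/-- There is a row support `C` with `C ∩ supp v = {p}` and `C ∩ supp v' = {p'}`. -/
def jsgEdge {m n : ℕ} (A : Matrix (Fin m) (Fin n) ℝ) (v v' : Fin n → ℝ)
    (p p' : Fin n) : Prop :=
  ∃ t, rowSupp A t ∩ supp v = {p} ∧ rowSupp A t ∩ supp v' = {p'}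

/-- The joint saturation graph of `v` and `v'` with respect to `A`. -/
def JSG {m n : ℕ} (A : Matrix (Fin m) (Fin n) ℝ) (v v' : Fin n → ℝ) :
    SimpleGraph (Fin n) where
  Adj p p' := p ≠ p' ∧ (jsgEdge A v v' p p' ∨ jsgEdge A v v' p' p)
  symm := ⟨by intro p p' h; exact ⟨h.1.symm, h.2.symm⟩⟩
  loopless := ⟨by intro p h; exact h.1 rfl⟩

/-- The node set of the joint saturation graph: the symmetric difference of the supports. -/
def jsgNodes {n : ℕ} (v v' : Fin n → ℝ) : Set (Fin n) :=
  (supp v \ supp v') ∪ (supp v' \ supp v)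

def JSGConnected {m n : ℕ} (A : Matrix (Fin m) (Fin n) ℝ) (v v' : Fin n → ℝ) : Prop :=
  ∀ p ∈ jsgNodes v v', ∀ q ∈ jsgNodes v v', (JSG A v v').Reachable p q

/-- One of the two partite sets is contained in a single connected component. -/
def JSGPartiteConnected {m n : ℕ} (A : Matrix (Fin m) (Fin n) ℝ) (v v' : Fin n → ℝ) : Prop :=
  (∀ p ∈ supp v \ supp v', ∀ q ∈ supp v \ supp v', (JSG A v v').Reachable p q) ∨
  (∀ p ∈ supp v' \ supp v, ∀ q ∈ supp v' \ supp v, (JSG A v v').Reachable p q)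

/-- Exactly two components, one of which is an isolated node. -/
def JSGAlmostConnected {m n : ℕ} (A : Matrix (Fin m) (Fin n) ℝ) (v v' : Fin n → ℝ) : Prop :=
  ∃ q ∈ jsgNodes v v', (∀ p, ¬ (JSG A v v').Adj q p) ∧ (jsgNodes v v' \ {q}).Nonempty ∧
    ∀ p ∈ jsgNodes v v' \ {q}, ∀ r ∈ jsgNodes v v' \ {q}, (JSG A v v').Reachable p r

/-- The (directed) circular arc from `i` to `j` in `Fin n`. -/
def arc {n : ℕ} [NeZero n] (i j : Fin n) : Set (Fin n) :=
  {k | ∃ h : ℕ, h ≤ ((j - i : Fin n) : ℕ) ∧ k = i + (Fin.ofNat n h : Fin n)}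

/-- A matrix is row circular if each row support is a circular arc. -/
def RowCircular {m n : ℕ} [NeZero n] (A : Matrix (Fin m) (Fin n) ℝ) : Prop :=
  ∀ t, ∃ i j : Fin n, rowSupp A t = arc i j

/-- The standard assumptions: binary, no dominating rows, between 2 and n-1 ones per row,
no all-zero or all-one column. -/
def StandardAssumptions {m n : ℕ} (A : Matrix (Fin m) (Fin n) ℝ) : Prop :=
  IsBinaryMatrix A ∧
  (∀ s t : Fin m, s ≠ t → ¬ rowSupp A s ⊆ rowSupp A t) ∧
  (∀ t, 2 ≤ (rowSupp A t).ncard ∧ (rowSupp A t).ncard ≤ n - 1) ∧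
  (∀ j : Fin n, (∃ t, A t j ≠ 0) ∧ (∃ t, A t j = 0))

/-- `a` and `b` occur consecutively (in either order) in the list `l`. -/
def ListConsec {α : Type*} (l : List α) (a b : α) : Prop :=
  ∃ k : ℕ, (l[k]? = some a ∧ l[k+1]? = some b) ∨ (l[k]? = some b ∧ l[k+1]? = some a)

/-- `a` and `b` occur cyclically consecutively (in either order) in the list `l`. -/
def CycConsec {α : Type*} (l : List α) (a b : α) : Prop :=
  ∃ k : ℕ, k < l.length ∧
    ((l[k]? = some a ∧ l[(k+1) % l.length]? = some b) ∨
     (l[k]? = some b ∧ l[(k+1) % l.length]? = some a))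

/-- The set `S` induces a path (possibly a single node) in `G`. -/
def IsPathOn {n : ℕ} (G : SimpleGraph (Fin n)) (S : Set (Fin n)) : Prop :=
  ∃ l : List (Fin n), l.Nodup ∧ (∀ x, x ∈ S ↔ x ∈ l) ∧
    (∀ a b, a ∈ S → G.Adj a b → ListConsec l a b) ∧
    (∀ a b, ListConsec l a b → G.Adj a b)

/-- The set `S` induces a cycle in `G`. -/
def IsCycleOn {n : ℕ} (G : SimpleGraph (Fin n)) (S : Set (Fin n)) : Prop :=
  ∃ l : List (Fin n), 3 ≤ l.length ∧ l.Nodup ∧ (∀ x, x ∈ S ↔ x ∈ l) ∧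
    (∀ a b, a ∈ S → G.Adj a b → CycConsec l a b) ∧
    (∀ a b, CycConsec l a b → G.Adj a b)

/-- `p` and `q` are cyclically consecutive elements of `S`. -/
def CyclConsecIn {n : ℕ} [NeZero n] (S : Set (Fin n)) (p q : Fin n) : Prop :=
  p ≠ q ∧ p ∈ S ∧ q ∈ S ∧ (arc p q ∩ S = {p, q} ∨ arc q p ∩ S = {p, q})

/-- The circulant matrix `C(n,2)` with row supports `{t, t+1}` (mod n). -/
def Cn2 (n : ℕ) [NeZero n] : Matrix (Fin n) (Fin n) ℝ :=
  fun t j => if j = t ∨ j = t + 1 then 1 else 0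

/-- Append a row to a matrix. -/
def appendRow {m n : ℕ} (A : Matrix (Fin m) (Fin n) ℝ) (a : Fin n → ℝ) :
    Matrix (Fin (m+1)) (Fin n) ℝ :=
  fun t j => if h : (t : ℕ) < m then A ⟨t, h⟩ j else a j

/-- A set of points is integral if all its extreme points are integer vectors. -/
def IsIntegralSet {n : ℕ} (S : Set (Fin n → ℝ)) : Prop :=
  ∀ x ∈ S.extremePoints ℝ, ∀ j, ∃ z : ℤ, x j = z

/-- A binary matrix is minimally nonideal if `Q(A)` is not integral but both restrictions
`Q(A) ∩ {x_i = 0}` and `Q(A) ∩ {x_i = 1}` are integral for every coordinate `i`. -/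
def MinimallyNonideal {m n : ℕ} (A : Matrix (Fin m) (Fin n) ℝ) : Prop :=
  ¬ IsIntegralSet (polyQ A) ∧
  ∀ i : Fin n, IsIntegralSet (polyQ A ∩ {x | x i = 0}) ∧
               IsIntegralSet (polyQ A ∩ {x | x i = 1})

/-- The matrix of the degenerate projective plane with `t+1` points and lines. -/
def Jmat (t : ℕ) : Matrix (Fin (t+1)) (Fin (t+1)) ℝ :=
  fun i j => if i = 0 then (if j = 0 then 0 else 1) else (if j = 0 ∨ j = i then 1 else 0)

/-- `A` is isomorphic to some degenerate projective plane matrix `J_t`, `t ≥ 2`. -/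
def IsoToDegenProjPlane {m n : ℕ} (A : Matrix (Fin m) (Fin n) ℝ) : Prop :=
  ∃ t : ℕ, 2 ≤ t ∧ ∃ (σ : Fin m ≃ Fin (t+1)) (τ : Fin n ≃ Fin (t+1)),
    ∀ i j, A i j = Jmat t (σ i) (τ j)

/-- `A₁` is the core of `A`: a square nonsingular row submatrix with `r` ones per row and
per column, all other rows of `A` having more than `r` ones. -/
def IsCore {m n : ℕ} (A : Matrix (Fin m) (Fin n) ℝ) (A₁ : Matrix (Fin n) (Fin n) ℝ)
    (r : ℕ) : Prop :=
  2 ≤ r ∧ A₁.det ≠ 0 ∧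
  (∃ f : Fin n → Fin m, Function.Injective f ∧ (∀ i, A₁ i = A (f i)) ∧
    ∀ t, t ∉ Set.range f → r < (rowSupp A t).ncard) ∧
  (∀ i, (rowSupp A₁ i).ncard = r) ∧ (∀ j, {i | A₁ i j ≠ 0}.ncard = r)

/-- `B₁` is the core of the blocker of `A`: a square nonsingular matrix whose rows are
binary vertices of `Q*(A)` with `s` ones per row and per column, all other binary
vertices of `Q*(A)` having more than `s` ones. -/
def IsBlockerCore {m n : ℕ} (A : Matrix (Fin m) (Fin n) ℝ) (B₁ : Matrix (Fin n) (Fin n) ℝ)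
    (s : ℕ) : Prop :=
  2 ≤ s ∧ B₁.det ≠ 0 ∧
  (∀ i, IsBinaryVec (B₁ i) ∧ IsVertex (Qstar A) (B₁ i)) ∧
  Function.Injective (fun i => B₁ i) ∧
  (∀ i, (rowSupp B₁ i).ncard = s) ∧ (∀ j, {i | B₁ i j ≠ 0}.ncard = s) ∧
  (∀ x, IsBinaryVec x → IsVertex (Qstar A) x → (∀ i, x ≠ B₁ i) → s < (supp x).ncard)

/-- `w^i` for `n = 3ν`: the complement of the characteristic vector of the residue class
`i` mod 3. -/
def wVec (n : ℕ) (i : Fin 3) : Fin n → ℝ :=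
  fun k => if (k : ℕ) % 3 = (i : ℕ) then 0 else 1

/-- `a^i` for `n = 3ν`: the characteristic vector of the residue class `i` mod 3
(`a¹ = (1,0,0,1,0,0,…)` corresponds to `i = 0`). -/
def aVec (n : ℕ) (i : ℕ) : Fin n → ℝ :=
  fun k => if (k : ℕ) % 3 = i then 1 else 0

lemma finSubVal {n : ℕ} [NeZero n] (w i : Fin n) :
    ((w - i : Fin n) : ℕ) = if (i:ℕ) ≤ (w:ℕ) then (w:ℕ) - i else (w:ℕ) + n - i := by
  have hn : 0 < n := Nat.pos_of_ne_zero (NeZero.ne n)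
  have hw := w.isLt; have hi := i.isLt
  have h0 : (w - i : Fin n) = ⟨((n - (i:ℕ)) + (w:ℕ)) % n, Nat.mod_lt _ hn⟩ := by
    rw [Fin.sub_def]
  rw [h0]
  rcases le_or_gt (i:ℕ) (w:ℕ) with h | h
  · rw [if_pos h]
    have h1 : ((n - (i:ℕ)) + (w:ℕ)) = ((w:ℕ) - i) + n := by omega
    simp only [h1, Nat.add_mod_right, Nat.mod_eq_of_lt (show (w:ℕ) - i < n by omega)]
  · rw [if_neg (by omega)]
    show ((n - (i:ℕ)) + (w:ℕ)) % n = (w:ℕ) + n - i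
    rw [Nat.mod_eq_of_lt (by omega)]
    omega

lemma mem_arc_iff {n : ℕ} [NeZero n] (i j w : Fin n) :
    w ∈ arc i j ↔ ((w - i : Fin n) : ℕ) ≤ ((j - i : Fin n) : ℕ) := by
  constructor
  · rintro ⟨h, hh, rfl⟩
    have hlt : h < n := lt_of_le_of_lt hh (j - i).isLt
    have : (i + (Fin.ofNat n h : Fin n) - i : Fin n) = (Fin.ofNat n h : Fin n) := by abel
    rw [this, Fin.val_ofNat, Nat.mod_eq_of_lt hlt]; exact hh
  · intro h
    refine ⟨((w - i : Fin n) : ℕ), h, ?_⟩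
    rw [show (Fin.ofNat n ((w - i : Fin n) : ℕ) : Fin n) = w - i from
      Fin.ext (by rw [Fin.val_ofNat]; exact Nat.mod_eq_of_lt (w - i).isLt)]; abel

/-- rank of `d` in `D`. -/
noncomputable def rnk {n k : ℕ} (D : Finset (Fin n)) (hk : D.card = k) (d : Fin n) : ℕ :=
  if h : d ∈ D then (((D.orderIsoOfFin hk).symm ⟨d, h⟩ : Fin k) : ℕ) else 0

lemma rnk_lt {n k : ℕ} (D : Finset (Fin n)) (hk : D.card = k) {d : Fin n} (hd : d ∈ D) :
    rnk D hk d < k := by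
  rw [rnk, dif_pos hd]; exact ((D.orderIsoOfFin hk).symm ⟨d, hd⟩).isLt

lemma rnk_orderIso {n k : ℕ} (D : Finset (Fin n)) (hk : D.card = k) (r : Fin k) :
    rnk D hk ((D.orderIsoOfFin hk r : Fin n)) = (r : ℕ) := by
  have hm : ((D.orderIsoOfFin hk r : Fin n)) ∈ D := (D.orderIsoOfFin hk r).2
  rw [rnk, dif_pos hm]
  congr 1
  have : (⟨(D.orderIsoOfFin hk r : Fin n), hm⟩ : {x // x ∈ D}) = D.orderIsoOfFin hk r := by
    ext; rfl
  rw [this, OrderIso.symm_apply_apply]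

lemma rnk_surj {n k : ℕ} (D : Finset (Fin n)) (hk : D.card = k) {r : ℕ} (hr : r < k) :
    ∃ d ∈ D, rnk D hk d = r := by
  refine ⟨(D.orderIsoOfFin hk ⟨r, hr⟩ : Fin n), (D.orderIsoOfFin hk ⟨r, hr⟩).2, ?_⟩
  rw [rnk_orderIso]

lemma rnk_inj {n k : ℕ} (D : Finset (Fin n)) (hk : D.card = k) {d d' : Fin n}
    (hd : d ∈ D) (hd' : d' ∈ D) (h : rnk D hk d = rnk D hk d') : d = d' := by
  rw [rnk, dif_pos hd, rnk, dif_pos hd'] at h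
  have := Fin.val_injective h
  have := (D.orderIsoOfFin hk).symm.injective this
  exact Subtype.ext_iff.mp this

lemma rnk_mono {n k : ℕ} (D : Finset (Fin n)) (hk : D.card = k) {d d' : Fin n}
    (hd : d ∈ D) (hd' : d' ∈ D) : rnk D hk d ≤ rnk D hk d' ↔ d ≤ d' := by
  rw [rnk, dif_pos hd, rnk, dif_pos hd']
  rw [← Fin.le_def, OrderIso.le_iff_le, Subtype.mk_le_mk]


section
variable {n k : ℕ} [NeZero n]
set_option linter.unusedSectionVars false
lemma triple_lemma (D S : Finset (Fin n)) (hk : D.card = k)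
    (hSD : S ⊆ D) (i j : Fin n)
    (hchar : ∀ d ∈ D, (d ∈ S ↔ ((d - i : Fin n) : ℕ) ≤ ((j - i : Fin n) : ℕ)))
    (hS3 : 3 ≤ S.card) :
    ∃ a : ℕ, a < k ∧
      (∃ da ∈ S, rnk D hk da = a) ∧
      (∃ db ∈ S, rnk D hk db = (a+1) % k) ∧
      (∃ dc ∈ S, rnk D hk dc = (a+2) % k) := by
  classical
  set M := ((j - i : Fin n) : ℕ) with hMdef
  have hMlt : M < n := (j - i).isLt
  have hin := i.isLt
  have hk3 : 3 ≤ k := le_trans hS3 (hk ▸ Finset.card_le_card hSD)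
  have hkpos : 0 < k := by omega
  -- the element of rank r
  set ed : ℕ → Fin n := fun r => if h : r < k then (D.orderIsoOfFin hk ⟨r, h⟩ : Fin n) else i
    with hed_def
  have hed_mem : ∀ r, r < k → ed r ∈ D := by
    intro r hr; simp only [hed_def, dif_pos hr]; exact (D.orderIsoOfFin hk ⟨r, hr⟩).2
  have hed_rnk : ∀ r, r < k → rnk D hk (ed r) = r := by
    intro r hr; simp only [hed_def, dif_pos hr]; exact rnk_orderIso D hk ⟨r, hr⟩
  have hed_mono : ∀ r s, r ≤ s → s < k → (ed r : ℕ) ≤ (ed s : ℕ) := by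
    intro r s hrs hs
    have hr : r < k := lt_of_le_of_lt hrs hs
    have := (rnk_mono D hk (hed_mem r hr) (hed_mem s hs)).mp
      (by rw [hed_rnk r hr, hed_rnk s hs]; exact hrs)
    exact this
  -- numeric characterization of membership in S
  have hcharN : ∀ r, r < k →
      (ed r ∈ S ↔ (if (i:ℕ) ≤ (ed r : ℕ) then (ed r : ℕ) - i else (ed r : ℕ) + n - i) ≤ M) := by
    intro r hr
    rw [hchar _ (hed_mem r hr), finSubVal]
  have hedlt : ∀ r : ℕ, (ed r : ℕ) < n := fun r => (ed r).isLt
  -- rank set of S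
  set R : Finset ℕ := S.image (rnk D hk) with hRdef
  have hRcard : R.card = S.card :=
    Finset.card_image_of_injOn (fun d hd d' hd' h => rnk_inj D hk (hSD hd) (hSD hd') h)
  have hR3 : 3 ≤ R.card := hRcard ▸ hS3
  have hmemR : ∀ r ∈ R, r < k ∧ ed r ∈ S := by
    intro r hr
    obtain ⟨d, hdS, hdr⟩ := Finset.mem_image.mp hr
    have hdD := hSD hdS
    have hrk : r < k := hdr ▸ rnk_lt D hk hdD
    have : ed r = d := by
      apply rnk_inj D hk (hed_mem r hrk) hdD
      rw [hed_rnk r hrk, hdr]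
    exact ⟨hrk, this ▸ hdS⟩
  have hRne : R.Nonempty := Finset.card_pos.mp (by omega)
  -- final goal packager
  have goal : ∀ a : ℕ, a < k → ed a ∈ S → ed ((a+1) % k) ∈ S → ed ((a+2) % k) ∈ S →
      (∃ a : ℕ, a < k ∧
      (∃ da ∈ S, rnk D hk da = a) ∧
      (∃ db ∈ S, rnk D hk db = (a+1) % k) ∧
      (∃ dc ∈ S, rnk D hk dc = (a+2) % k)) := by
    intro a ha h1 h2 h3
    exact ⟨a, ha, ⟨ed a, h1, hed_rnk a ha⟩,
      ⟨ed ((a+1)%k), h2, hed_rnk _ (Nat.mod_lt _ hkpos)⟩,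
      ⟨ed ((a+2)%k), h3, hed_rnk _ (Nat.mod_lt _ hkpos)⟩⟩
  by_cases hwrap : (i:ℕ) + M < n
  · -- linear (non-wrapping) case
    have hchar2 : ∀ r, r < k → (ed r ∈ S ↔ ((i:ℕ) ≤ (ed r:ℕ) ∧ (ed r:ℕ) ≤ (i:ℕ) + M)) := by
      intro r hr
      rw [hcharN r hr]
      have := hedlt r
      split_ifs with h <;> omega
    set a := R.min' hRne with hadef
    set z := R.max' hRne with hzdef
    obtain ⟨hak, haS⟩ := hmemR a (R.min'_mem hRne)
    obtain ⟨hzk, hzS⟩ := hmemR z (R.max'_mem hRne)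
    have hRIcc : R ⊆ Finset.Icc a z := fun r hr =>
      Finset.mem_Icc.mpr ⟨R.min'_le r hr, R.le_max' r hr⟩
    have hcard2 : R.card ≤ z + 1 - a := by
      have := Finset.card_le_card hRIcc
      rwa [Nat.card_Icc] at this
    have haz : a + 2 ≤ z := by omega
    have hbetween : ∀ s, a ≤ s → s ≤ z → ed s ∈ S := by
      intro s h1 h2
      have hs : s < k := lt_of_le_of_lt h2 hzk
      have hva := (hchar2 a hak).mp haS
      have hvz := (hchar2 z hzk).mp hzS
      have m1 := hed_mono a s h1 hs
      have m2 := hed_mono s z h2 hzk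
      exact (hchar2 s hs).mpr (by omega)
    have e1 : (a+1) % k = a + 1 := Nat.mod_eq_of_lt (by omega)
    have e2 : (a+2) % k = a + 2 := Nat.mod_eq_of_lt (by omega)
    exact goal a hak haS (by rw [e1]; exact hbetween _ (by omega) (by omega))
      (by rw [e2]; exact hbetween _ (by omega) (by omega))
  · -- wrapping case
    push_neg at hwrap
    have hchar2 : ∀ r, r < k →
        (ed r ∈ S ↔ ((i:ℕ) ≤ (ed r:ℕ) ∨ (ed r:ℕ) + n ≤ (i:ℕ) + M)) := by
      intro r hr
      rw [hcharN r hr]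
      have := hedlt r
      split_ifs with h <;> omega
    set Rhi := R.filter (fun r => (i:ℕ) ≤ (ed r : ℕ)) with hRhidef
    set Rlo := R.filter (fun r => ¬ (i:ℕ) ≤ (ed r : ℕ)) with hRlodef
    have hsplit : Rhi.card + Rlo.card = R.card := Finset.card_filter_add_card_filter_not _
    have hup : ∀ r ∈ Rhi, ∀ s, r ≤ s → s < k → ed s ∈ S := by
      intro r hr s hrs hs
      obtain ⟨hrR, hri⟩ := Finset.mem_filter.mp hr
      have hrk := (hmemR r hrR).1
      have := hed_mono r s hrs hs
      have := hedlt s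
      exact (hchar2 s hs).mpr (by omega)
    have hdown : ∀ r ∈ Rlo, ∀ s, s ≤ r → ed s ∈ S := by
      intro r hr s hsr
      obtain ⟨hrR, hri⟩ := Finset.mem_filter.mp hr
      obtain ⟨hrk, hrS⟩ := hmemR r hrR
      have hs : s < k := lt_of_le_of_lt hsr hrk
      have hvr := (hchar2 r hrk).mp hrS
      have := hed_mono s r hsr hrk
      exact (hchar2 s hs).mpr (by omega)
    have hlo_case : ∀ b ∈ Rlo, 2 ≤ b → ∃ a : ℕ, a < k ∧
      (∃ da ∈ S, rnk D hk da = a) ∧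
      (∃ db ∈ S, rnk D hk db = (a+1) % k) ∧
      (∃ dc ∈ S, rnk D hk dc = (a+2) % k) := by
      intro b hb hb2
      have e1 : (0+1) % k = 1 := Nat.mod_eq_of_lt (by omega)
      have e2 : (0+2) % k = 2 := Nat.mod_eq_of_lt (by omega)
      exact goal 0 (by omega) (hdown b hb 0 (by omega))
        (by rw [e1]; exact hdown b hb 1 (by omega))
        (by rw [e2]; exact hdown b hb 2 (by omega))
    by_cases hhi : Rhi.Nonempty
    · set a0 := Rhi.min' hhi with ha0def
      have ha0 : a0 ∈ Rhi := Rhi.min'_mem hhi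
      have ha0k : a0 < k := (hmemR a0 (Finset.mem_filter.mp ha0).1).1
      have hcardhi : Rhi.card ≤ k - a0 := by
        have hsub : Rhi ⊆ Finset.Icc a0 (k-1) := by
          intro r hr
          exact Finset.mem_Icc.mpr ⟨Rhi.min'_le r hr,
            by have := (hmemR r (Finset.mem_filter.mp hr).1).1; omega⟩
        have := Finset.card_le_card hsub
        rwa [Nat.card_Icc, show k - 1 + 1 - a0 = k - a0 by omega] at this
      by_cases hcase : a0 + 3 ≤ k
      · have e1 : (k-3+1) % k = k-2 := by
          rw [show k-3+1 = k-2 by omega]; exact Nat.mod_eq_of_lt (by omega)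
        have e2 : (k-3+2) % k = k-1 := by
          rw [show k-3+2 = k-1 by omega]; exact Nat.mod_eq_of_lt (by omega)
        exact goal (k-3) (by omega) (hup a0 ha0 _ (by omega) (by omega))
          (by rw [e1]; exact hup a0 ha0 _ (by omega) (by omega))
          (by rw [e2]; exact hup a0 ha0 _ (by omega) (by omega))
      · -- a0 ∈ {k-2, k-1}
        have hlone : Rlo.Nonempty := by
          apply Finset.card_pos.mp
          omega
        set b := Rlo.max' hlone with hbdef
        have hbmem : b ∈ Rlo := Rlo.max'_mem hlone
        have hcardlo : Rlo.card ≤ b + 1 := by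
          have hsub : Rlo ⊆ Finset.range (b+1) := by
            intro r hr
            exact Finset.mem_range.mpr (by have := Rlo.le_max' r hr; omega)
          have := Finset.card_le_card hsub
          rwa [Finset.card_range] at this
        by_cases hb2 : 2 ≤ b
        · exact hlo_case b hbmem hb2
        · by_cases ha02 : a0 + 2 = k
          · -- triple (k-2, k-1, 0)
            have e1 : (k-2+1) % k = k-1 := by
              rw [show k-2+1 = k-1 by omega]; exact Nat.mod_eq_of_lt (by omega)
            have e2 : (k-2+2) % k = 0 := by rw [show k-2+2 = k by omega]; exact Nat.mod_self k
            exact goal (k-2) (by omega) (hup a0 ha0 _ (by omega) (by omega))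
              (by rw [e1]; exact hup a0 ha0 _ (by omega) (by omega))
              (by rw [e2]; exact hdown b hbmem 0 (by omega))
          · -- a0 = k-1 : triple (k-1, 0, 1)
            have ha01 : a0 = k - 1 := by omega
            have hb1 : 1 ≤ b := by
              -- Rhi ⊆ {k-1} so card Rhi ≤ 1
              omega
            have e1 : (k-1+1) % k = 0 := by rw [show k-1+1 = k by omega]; exact Nat.mod_self k
            have e2 : (k-1+2) % k = 1 := by
              rw [show k-1+2 = 1+k by omega, Nat.add_mod_right]
              exact Nat.mod_eq_of_lt (by omega)
            exact goal (k-1) (by omega) (hup a0 ha0 _ (by omega) (by omega))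
              (by rw [e1]; exact hdown b hbmem 0 (by omega))
              (by rw [e2]; exact hdown b hbmem 1 (by omega))
    · -- Rhi empty : Rlo = R
      have : Rhi.card = 0 := by
        simp [Finset.not_nonempty_iff_eq_empty.mp hhi]
      have hlone : Rlo.Nonempty := Finset.card_pos.mp (by omega)
      set b := Rlo.max' hlone with hbdef
      have hbmem : b ∈ Rlo := Rlo.max'_mem hlone
      have hcardlo : Rlo.card ≤ b + 1 := by
        have hsub : Rlo ⊆ Finset.range (b+1) := by
          intro r hr
          exact Finset.mem_range.mpr (by have := Rlo.le_max' r hr; omega)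
        have := Finset.card_le_card hsub
        rwa [Finset.card_range] at this
      exact hlo_case b hbmem (by omega)
end


section
variable {m n : ℕ} (A : Matrix (Fin m) (Fin n) ℝ)

def Gset : Set (Fin n → ℝ) := {x | (∀ j, ∃ k : ℕ, x j = k) ∧ ∀ i, 1 ≤ ∑ j, A i j * x j}

lemma vert_mem_gen {v : Fin n → ℝ} (hv : IsVertex (Qstar A) v) : v ∈ Gset A :=
  extremePoints_convexHull_subset hv

lemma gen_nonneg {v : Fin n → ℝ} (hv : v ∈ Gset A) (j : Fin n) : 0 ≤ v j := by
  obtain ⟨k, hk⟩ := hv.1 j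
  rw [hk]; positivity

lemma gen_sub_Qstar : Gset A ⊆ Qstar A := subset_convexHull ℝ _

lemma row_nonneg (hA : IsBinaryMatrix A) (t : Fin m) (j : Fin n) : 0 ≤ A t j := by
  rcases hA t j with h | h <;> rw [h] <;> norm_num

/-- entries of binary vertices are 0 or 1 -/
lemma vert_binary (hA : IsBinaryMatrix A) {v : Fin n → ℝ} (hv : IsVertex (Qstar A) v)
    (j : Fin n) : v j = 0 ∨ v j = 1 := by
  by_contra hcon
  push_neg at hcon
  obtain ⟨h0, h1⟩ := hcon
  have hvG := vert_mem_gen A hv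
  obtain ⟨kj, hkj⟩ := hvG.1 j
  have hk2 : 2 ≤ kj := by
    rcases kj with _ | kj
    · exact absurd (by simpa using hkj) h0
    rcases kj with _ | kj
    · exact absurd (by simpa using hkj) h1
    omega
  have hk2' : (2:ℝ) ≤ v j := by rw [hkj]; exact_mod_cast hk2
  set e : Fin n → ℝ := Pi.single j 1 with hedef
  have hsum : ∀ t (x : Fin n → ℝ), ∑ l, A t l * (x l + e l) = (∑ l, A t l * x l) + A t j ∧
      ∑ l, A t l * (x l - e l) = (∑ l, A t l * x l) - A t j := by
    intro t x
    have h1 : ∑ l, A t l * e l = A t j := by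
      rw [hedef]
      rw [Finset.sum_eq_single j]
      · simp
      · intro b _ hb; simp [Pi.single_eq_of_ne hb]
      · simp
    constructor
    · rw [← h1]; rw [← Finset.sum_add_distrib]; congr 1; ext l; ring
    · rw [← h1]; rw [← Finset.sum_sub_distrib]; congr 1; ext l; ring
  have hsum_lb : ∀ t, A t j = 1 → 2 ≤ ∑ l, A t l * v l := by
    intro t ht
    calc (2:ℝ) ≤ A t j * v j := by rw [ht]; linarith
    _ ≤ ∑ l, A t l * v l := by
        apply Finset.single_le_sum (f := fun l => A t l * v l)
        · intro l _
          exact mul_nonneg (row_nonneg A hA t l) (gen_nonneg A hvG l)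
        · exact Finset.mem_univ j
  have hmem : ∀ s : ℝ, (s = 1 ∨ s = -1) → v + s • e ∈ Gset A := by
    intro s hs
    constructor
    · intro l
      by_cases hl : l = j
      · subst hl
        rcases hs with rfl | rfl
        · refine ⟨kj + 1, ?_⟩
          simp only [Pi.add_apply, Pi.smul_apply, hedef, Pi.single_eq_same, smul_eq_mul, hkj]
          push_cast; ring
        · refine ⟨kj - 1, ?_⟩
          simp only [Pi.add_apply, Pi.smul_apply, hedef, Pi.single_eq_same, smul_eq_mul, hkj]
          push_cast [Nat.cast_sub (by omega : 1 ≤ kj)]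
          ring
      · obtain ⟨kl, hkl⟩ := hvG.1 l
        exact ⟨kl, by simp [hedef, Pi.single_eq_of_ne hl, hkl]⟩
    · intro t
      have hfeas := hvG.2 t
      rcases hA t j with h0' | h1'
      · have : ∑ l, A t l * (v l + s * e l) = ∑ l, A t l * v l := by
          apply Finset.sum_congr rfl
          intro l _
          by_cases hl : l = j
          · subst hl; rw [h0']; ring
          · simp [hedef, Pi.single_eq_of_ne hl]
        simpa [Pi.add_apply, Pi.smul_apply, smul_eq_mul] using this ▸ hfeas
      · rcases hs with rfl | rfl
        · have h2 : ∑ l, A t l * (v l + e l) = (∑ l, A t l * v l) + A t j := (hsum t v).1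
          have h4 : (1:ℝ) ≤ ∑ l, A t l * (v l + e l) := by rw [h2, h1']; linarith
          have h5 : ∑ l, A t l * ((v + (1:ℝ) • e) l) = ∑ l, A t l * (v l + e l) := by
            apply Finset.sum_congr rfl; intro l _
            simp only [Pi.add_apply, Pi.smul_apply, smul_eq_mul]; ring
          rw [h5]; exact h4
        · have h2 : ∑ l, A t l * (v l - e l) = (∑ l, A t l * v l) - A t j := (hsum t v).2
          have h4 : (1:ℝ) ≤ ∑ l, A t l * (v l - e l) := by
            rw [h2, h1']; linarith [hsum_lb t h1']
          have h5 : ∑ l, A t l * ((v + (-1:ℝ) • e) l) = ∑ l, A t l * (v l - e l) := by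
            apply Finset.sum_congr rfl; intro l _
            simp only [Pi.add_apply, Pi.smul_apply, smul_eq_mul]; ring
          rw [h5]; exact h4
  have hx1 : v + (1:ℝ) • e ∈ Qstar A := gen_sub_Qstar A (hmem 1 (Or.inl rfl))
  have hx2 : v + (-1:ℝ) • e ∈ Qstar A := gen_sub_Qstar A (hmem (-1) (Or.inr rfl))
  have hseg : v ∈ openSegment ℝ (v + (1:ℝ) • e) (v + (-1:ℝ) • e) := by
    refine ⟨1/2, 1/2, by norm_num, by norm_num, by norm_num, ?_⟩
    ext l; simp [Pi.add_apply, Pi.smul_apply]; ring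
  have := hv.2 hx1 hx2 hseg
  have hej : e j = 0 := by
    have := congrFun this j
    simp [Pi.add_apply, Pi.smul_apply] at this
    linarith [this]
  rw [hedef] at hej; simp at hej
end

section
variable {m n : ℕ} (A : Matrix (Fin m) (Fin n) ℝ)

lemma not_vertex_of_le (hA : IsBinaryMatrix A) {v v' : Fin n → ℝ}
    (hvG : v ∈ Gset A) (hv' : IsVertex (Qstar A) v')
    (hle : ∀ j, v j ≤ v' j) (hne : v ≠ v') : False := by
  have hv'G := vert_mem_gen A hv'
  set w : Fin n → ℝ := (2:ℝ) • v' - v with hwdef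
  have hwG : w ∈ Gset A := by
    constructor
    · intro l
      obtain ⟨kl, hkl⟩ := hvG.1 l
      obtain ⟨kl', hkl'⟩ := hv'G.1 l
      have hlek : kl ≤ kl' := by
        have := hle l
        rw [hkl, hkl'] at this
        exact_mod_cast this
      refine ⟨2 * kl' - kl, ?_⟩
      simp only [hwdef, Pi.sub_apply, Pi.smul_apply, smul_eq_mul, hkl, hkl']
      push_cast [Nat.cast_sub (by omega : kl ≤ 2 * kl')]
      ring
    · intro t
      have : ∑ l, A t l * v' l ≤ ∑ l, A t l * w l := by
        apply Finset.sum_le_sum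
        intro l _
        apply mul_le_mul_of_nonneg_left _ (row_nonneg A hA t l)
        simp only [hwdef, Pi.sub_apply, Pi.smul_apply, smul_eq_mul]
        linarith [hle l]
      linarith [hv'G.2 t]
  have hseg : v' ∈ openSegment ℝ v w := by
    refine ⟨1/2, 1/2, by norm_num, by norm_num, by norm_num, ?_⟩
    ext l
    simp only [hwdef, Pi.add_apply, Pi.sub_apply, Pi.smul_apply, smul_eq_mul]
    ring
  exact hne (hv'.2 (gen_sub_Qstar A hvG) (gen_sub_Qstar A hwG) hseg)

lemma exists_diff (hA : IsBinaryMatrix A) {v v' : Fin n → ℝ}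
    (hv : IsVertex (Qstar A) v) (hv' : IsVertex (Qstar A) v') (hne : v ≠ v') :
    ∃ j, v j = 1 ∧ v' j = 0 := by
  by_contra hcon
  push_neg at hcon
  apply not_vertex_of_le A hA (vert_mem_gen A hv) hv' _ hne
  intro j
  rcases vert_binary A hA hv j with h0 | h1
  · rw [h0]; exact gen_nonneg A (vert_mem_gen A hv') j
  · rcases vert_binary A hA hv' j with h0' | h1'
    · exact absurd h0' (hcon j h1)
    · rw [h1, h1']
end


def Fpar : ℕ → Bool := fun a => decide (a % 2 = 0)
def Gpar : ℕ → Bool := fun a => if a = 0 then false else if a = 1 then true else Fpar a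

lemma Fpar_good {k : ℕ} (hk : 2 ≤ k) {a : ℕ} (ha : a < k) :
    Fpar ((a+1) % k) ≠ Fpar a ∨ Fpar ((a+2) % k) ≠ Fpar a := by
  rcases lt_or_ge (a+1) k with h | h
  · left
    rw [Nat.mod_eq_of_lt h]
    simp only [Fpar, ne_eq, decide_eq_decide]
    omega
  · have ha1 : a + 1 = k := by omega
    have e1 : (a+1) % k = 0 := by rw [ha1, Nat.mod_self]
    have e2 : (a+2) % k = 1 := by
      rw [show a+2 = 1+k by omega, Nat.add_mod_right]
      exact Nat.mod_eq_of_lt (by omega)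
    rw [e1, e2]
    by_cases hpa : a % 2 = 0
    · right; simp [Fpar, hpa]
    · left; simp [Fpar, hpa]

lemma Gpar_eq {a : ℕ} (ha : 2 ≤ a) : Gpar a = Fpar a := by
  rw [Gpar, if_neg (by omega), if_neg (by omega)]

lemma Gpar_good {k : ℕ} (hk : 3 ≤ k) {a : ℕ} (ha : a < k) :
    Gpar ((a+1) % k) ≠ Gpar a ∨ Gpar ((a+2) % k) ≠ Gpar a := by
  match a with
  | 0 =>
    left
    rw [Nat.mod_eq_of_lt (by omega : (1:ℕ) < k)]
    decide
  | 1 =>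
    rcases eq_or_lt_of_le hk with h3 | h4
    · right
      rw [show (1+2) % k = 0 by rw [← h3]]
      decide
    · right
      rw [Nat.mod_eq_of_lt (by omega : (3:ℕ) < k)]
      decide
  | (b+2) =>
    have hG : Gpar (b+2) = Fpar (b+2) := Gpar_eq (by omega)
    rcases lt_or_ge (b+3) k with h | h
    · left
      rw [Nat.mod_eq_of_lt (by omega : b+2+1 < k), hG,
        Gpar_eq (by omega : 2 ≤ b+2+1)]
      simp only [Fpar, ne_eq, decide_eq_decide]
      omega
    · have hb3 : b + 3 = k := by omega
      have e1 : (b+2+1) % k = 0 := by rw [show b+2+1 = k by omega, Nat.mod_self]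
      have e2 : (b+2+2) % k = 1 := by
        rw [show b+2+2 = 1+k by omega, Nat.add_mod_right]
        exact Nat.mod_eq_of_lt (by omega)
      rw [e1, e2, hG]
      by_cases hb : (b+2) % 2 = 0
      · left
        simp [Gpar, Fpar, hb]
      · right
        simp [Gpar, Fpar, hb]
        omega

/-- for row circular `A`, if the joint saturation graph has no edges, then
the vertices are not adjacent in `Q*(A)`. -/
theorem stmt10 {m n : ℕ} [NeZero n] (A : Matrix (Fin m) (Fin n) ℝ)
    (hstd : StandardAssumptions A) (hcirc : RowCircular A)
    (v v' : Fin n → ℝ) (hne : v ≠ v')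
    (hv : IsVertex (Qstar A) v) (hv' : IsVertex (Qstar A) v')
    (hnoedge : ∀ p q : Fin n, ¬ (JSG A v v').Adj p q) :
    ¬ AdjacentVerts (Qstar A) v v' := by
  classical
  rintro ⟨hvne, -, -, hExt⟩
  obtain ⟨hA, -, -, -⟩ := hstd
  have hvG := vert_mem_gen A hv
  have hv'G := vert_mem_gen A hv'
  have hvb := vert_binary A hA hv
  have hv'b := vert_binary A hA hv'
  obtain ⟨j1, hj1v, hj1v'⟩ := exists_diff A hA hv hv' hne
  obtain ⟨j2, hj2v', hj2v⟩ := exists_diff A hA hv' hv hne.symm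
  set D : Finset (Fin n) := Finset.univ.filter (fun j => v j ≠ v' j) with hDdef
  have hmemD : ∀ j, j ∈ D ↔ v j ≠ v' j := by intro j; simp [hDdef]
  have hDvals : ∀ j ∈ D, (v j = 1 ∧ v' j = 0) ∨ (v j = 0 ∧ v' j = 1) := by
    intro j hj
    have hne' := (hmemD j).mp hj
    rcases hvb j with h0 | h1 <;> rcases hv'b j with h0' | h1'
    · exact absurd (h0.trans h0'.symm) hne'
    · exact Or.inr ⟨h0, h1'⟩
    · exact Or.inl ⟨h1, h0'⟩
    · exact absurd (h1.trans h1'.symm) hne'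
  have hj1D : j1 ∈ D := (hmemD j1).mpr (by rw [hj1v, hj1v']; norm_num)
  have hj2D : j2 ∈ D := (hmemD j2).mpr (by rw [hj2v, hj2v']; norm_num)
  -- candidate binary vectors built from a 2-colouring of `D`
  set xv : (Fin n → Bool) → (Fin n → ℝ) :=
    fun c j => if v j = v' j then v j else if c j then 1 else 0 with hxvdef
  have hxvD : ∀ (c : Fin n → Bool), ∀ j ∈ D, xv c j = if c j then 1 else 0 := by
    intro c j hj; simp only [hxvdef]; rw [if_neg ((hmemD j).mp hj)]
  have hxvnD : ∀ (c : Fin n → Bool), ∀ j, j ∉ D → xv c j = v j := by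
    intro c j hj
    have hvv : v j = v' j := by by_contra hc; exact hj ((hmemD j).mpr hc)
    simp only [hxvdef]; rw [if_pos hvv]
  have hxnn : ∀ (c : Fin n → Bool) (j : Fin n), 0 ≤ xv c j := by
    intro c j; simp only [hxvdef]; split_ifs
    · exact gen_nonneg A hvG j
    · norm_num
    · norm_num
  have hxint : ∀ (c : Fin n → Bool) (j : Fin n), ∃ kk : ℕ, xv c j = kk := by
    intro c j; simp only [hxvdef]; split_ifs
    · exact hvG.1 j
    · exact ⟨1, by norm_num⟩
    · exact ⟨0, by norm_num⟩
  have hxG : ∀ (c : Fin n → Bool), (∀ t, ∃ jj, A t jj = 1 ∧ xv c jj = 1) → xv c ∈ Gset A := by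
    intro c hcov
    refine ⟨hxint c, ?_⟩
    intro t
    obtain ⟨jj, hA1, hx1⟩ := hcov t
    calc (1:ℝ) = A t jj * xv c jj := by rw [hA1, hx1]; ring
    _ ≤ ∑ l, A t l * xv c l :=
        Finset.single_le_sum
          (fun l _ => mul_nonneg (row_nonneg A hA t l) (hxnn c l)) (Finset.mem_univ jj)
  -- the key geometric step
  have construct : ∀ c : Fin n → Bool,
      (∀ t, ∃ jj, A t jj = 1 ∧ xv c jj = 1) →
      (∀ t, ∃ jj, A t jj = 1 ∧ xv (fun j => !(c j)) jj = 1) →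
      xv c ≠ v → xv c ≠ v' → False := by
    intro c hcov hcov' hxnv hxnv'
    have hxQ : xv c ∈ Qstar A := gen_sub_Qstar A (hxG c hcov)
    have hyQ : xv (fun j => !(c j)) ∈ Qstar A := gen_sub_Qstar A (hxG _ hcov')
    have hmidmem : (1/2:ℝ) • v + (1/2:ℝ) • v' ∈ segment ℝ v v' :=
      ⟨1/2, 1/2, by norm_num, by norm_num, by norm_num, rfl⟩
    have hopen : (1/2:ℝ) • v + (1/2:ℝ) • v'
        ∈ openSegment ℝ (xv c) (xv (fun j => !(c j))) := by
      refine ⟨1/2, 1/2, by norm_num, by norm_num, by norm_num, ?_⟩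
      ext l
      simp only [Pi.add_apply, Pi.smul_apply, smul_eq_mul]
      by_cases hl : l ∈ D
      · rw [hxvD c l hl, hxvD (fun j => !(c j)) l hl]
        rcases hDvals l hl with ⟨ha1, hb0⟩ | ⟨ha0, hb1⟩
        · rw [ha1, hb0]; cases hcl : c l <;> simp <;> try ring
        · rw [ha0, hb1]; cases hcl : c l <;> simp <;> try ring
      · rw [hxvnD c l hl, hxvnD (fun j => !(c j)) l hl]
        have hvv : v l = v' l := by by_contra hc; exact hl ((hmemD l).mpr hc)
        rw [← hvv]; try ring
    have hseg1 := hExt.2 hxQ hyQ hmidmem hopen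
    obtain ⟨a, b, ha, hb, hab, hxe⟩ := hseg1
    have hj1eq : a * v j1 + b * v' j1 = xv c j1 := by
      have := congrFun hxe j1
      simpa [Pi.add_apply, Pi.smul_apply, smul_eq_mul] using this
    rw [hj1v, hj1v'] at hj1eq
    have hxa : xv c j1 = a := by linarith
    have hx01 : xv c j1 = 0 ∨ xv c j1 = 1 := by
      rw [hxvD c j1 hj1D]; cases c j1 <;> simp
    rcases hx01 with h0 | h1
    · apply hxnv'
      have ha0 : a = 0 := by rw [h0] at hxa; exact hxa.symm
      have hb1 : b = 1 := by linarith
      rw [← hxe]; ext l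
      simp only [Pi.add_apply, Pi.smul_apply, smul_eq_mul, ha0, hb1]; ring
    · apply hxnv
      have ha1 : a = 1 := by rw [h1] at hxa; exact hxa.symm
      have hb0 : b = 0 := by linarith
      rw [← hxe]; ext l
      simp only [Pi.add_apply, Pi.smul_apply, smul_eq_mul, ha1, hb0]; ring
  -- the traces of critical rows on `D`
  set SS : Fin m → Finset (Fin n) :=
    fun t => Finset.univ.filter (fun jj => A t jj ≠ 0 ∧ jj ∈ D) with hSSdef
  have card3 : ∀ t, (∀ jj, A t jj ≠ 0 → v jj = 1 → v' jj ≠ 1) → 3 ≤ (SS t).card := by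
    intro t ht
    set P1 := Finset.univ.filter (fun jj => A t jj ≠ 0 ∧ v jj = 1) with hP1def
    set P2 := Finset.univ.filter (fun jj => A t jj ≠ 0 ∧ v' jj = 1) with hP2def
    have hP1ne : P1.Nonempty := by
      have hsumne : (∑ l, A t l * v l) ≠ 0 := by
        have := hvG.2 t; intro h; rw [h] at this; linarith
      obtain ⟨l, -, hl⟩ := Finset.exists_ne_zero_of_sum_ne_zero hsumne
      obtain ⟨hAl, hvl⟩ := mul_ne_zero_iff.mp hl
      refine ⟨l, Finset.mem_filter.mpr ⟨Finset.mem_univ l, hAl, ?_⟩⟩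
      rcases hvb l with h | h
      · exact absurd h hvl
      · exact h
    have hP2ne : P2.Nonempty := by
      have hsumne : (∑ l, A t l * v' l) ≠ 0 := by
        have := hv'G.2 t; intro h; rw [h] at this; linarith
      obtain ⟨l, -, hl⟩ := Finset.exists_ne_zero_of_sum_ne_zero hsumne
      obtain ⟨hAl, hvl⟩ := mul_ne_zero_iff.mp hl
      refine ⟨l, Finset.mem_filter.mpr ⟨Finset.mem_univ l, hAl, ?_⟩⟩
      rcases hv'b l with h | h
      · exact absurd h hvl
      · exact h
    have hsub1 : P1 ⊆ SS t := by
      intro jj hjj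
      obtain ⟨-, hA0, hv1⟩ := Finset.mem_filter.mp hjj
      have hv'0 : v' jj = 0 := by
        rcases hv'b jj with h | h
        · exact h
        · exact absurd h (ht jj hA0 hv1)
      exact Finset.mem_filter.mpr ⟨Finset.mem_univ jj, hA0,
        (hmemD jj).mpr (by rw [hv1, hv'0]; norm_num)⟩
    have hsub2 : P2 ⊆ SS t := by
      intro jj hjj
      obtain ⟨-, hA0, hv'1⟩ := Finset.mem_filter.mp hjj
      have hv0 : v jj = 0 := by
        rcases hvb jj with h | h
        · exact h
        · exact absurd hv'1 (ht jj hA0 h)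
      exact Finset.mem_filter.mpr ⟨Finset.mem_univ jj, hA0,
        (hmemD jj).mpr (by rw [hv0, hv'1]; norm_num)⟩
    have hdisj : Disjoint P1 P2 := by
      rw [Finset.disjoint_left]
      intro jj h1 h2
      obtain ⟨-, hA0, hv1⟩ := Finset.mem_filter.mp h1
      obtain ⟨-, -, hv'1⟩ := Finset.mem_filter.mp h2
      exact ht jj hA0 hv1 hv'1
    have hunion : SS t ⊆ P1 ∪ P2 := by
      intro jj hjj
      obtain ⟨-, hA0, hjD⟩ := Finset.mem_filter.mp hjj
      rcases hDvals jj hjD with ⟨h1, -⟩ | ⟨-, h1⟩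
      · exact Finset.mem_union_left _ (Finset.mem_filter.mpr ⟨Finset.mem_univ jj, hA0, h1⟩)
      · exact Finset.mem_union_right _ (Finset.mem_filter.mpr ⟨Finset.mem_univ jj, hA0, h1⟩)
    by_contra hlt
    push_neg at hlt
    have hle : (P1 ∪ P2).card ≤ (SS t).card :=
      Finset.card_le_card (Finset.union_subset hsub1 hsub2)
    rw [Finset.card_union_of_disjoint hdisj] at hle
    have hc1 : P1.card = 1 := by
      have := Finset.card_pos.mpr hP1ne
      have := Finset.card_pos.mpr hP2ne
      omega
    have hc2 : P2.card = 1 := by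
      have := Finset.card_pos.mpr hP1ne
      have := Finset.card_pos.mpr hP2ne
      omega
    obtain ⟨p, hp⟩ := Finset.card_eq_one.mp hc1
    obtain ⟨p', hp'⟩ := Finset.card_eq_one.mp hc2
    have hpP1 : p ∈ P1 := hp ▸ Finset.mem_singleton_self p
    have hp'P2 : p' ∈ P2 := hp' ▸ Finset.mem_singleton_self p'
    obtain ⟨-, hpA, hpv⟩ := Finset.mem_filter.mp hpP1
    obtain ⟨-, hp'A, hp'v⟩ := Finset.mem_filter.mp hp'P2
    have hpp' : p ≠ p' := by
      intro h
      exact (Finset.disjoint_left.mp hdisj) hpP1 (h ▸ hp'P2)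
    have hset1 : rowSupp A t ∩ supp v = {p} := by
      ext x
      simp only [Set.mem_inter_iff, Set.mem_singleton_iff, rowSupp, supp, Set.mem_setOf_eq]
      constructor
      · rintro ⟨hxA, hxv⟩
        have hxv1 : v x = 1 := by
          rcases hvb x with h | h
          · exact absurd h hxv
          · exact h
        have : x ∈ P1 := Finset.mem_filter.mpr ⟨Finset.mem_univ x, hxA, hxv1⟩
        rw [hp] at this
        exact Finset.mem_singleton.mp this
      · rintro rfl
        exact ⟨hpA, by rw [hpv]; norm_num⟩
    have hset2 : rowSupp A t ∩ supp v' = {p'} := by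
      ext x
      simp only [Set.mem_inter_iff, Set.mem_singleton_iff, rowSupp, supp, Set.mem_setOf_eq]
      constructor
      · rintro ⟨hxA, hxv⟩
        have hxv1 : v' x = 1 := by
          rcases hv'b x with h | h
          · exact absurd h hxv
          · exact h
        have : x ∈ P2 := Finset.mem_filter.mpr ⟨Finset.mem_univ x, hxA, hxv1⟩
        rw [hp'] at this
        exact Finset.mem_singleton.mp this
      · rintro rfl
        exact ⟨hp'A, by rw [hp'v]; norm_num⟩
    exact hnoedge p p' ⟨hpp', Or.inl ⟨t, hset1, hset2⟩⟩
  -- case analysis : are there critical rows at all?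
  by_cases hcrit : ∀ t, ∃ jj, A t jj ≠ 0 ∧ v jj = 1 ∧ v' jj = 1
  · -- no critical rows : use the constant colouring
    have hcommon : ∀ (c : Fin n → Bool) (t : Fin m), ∃ jj, A t jj = 1 ∧ xv c jj = 1 := by
      intro c t
      obtain ⟨jj, h0, h1, h1'⟩ := hcrit t
      have hjj : jj ∉ D := fun h => (hmemD jj).mp h (h1.trans h1'.symm)
      refine ⟨jj, ?_, by rw [hxvnD c jj hjj, h1]⟩
      rcases hA t jj with h | h
      · exact absurd h h0
      · exact h
    apply construct (fun _ => true) (hcommon _) (hcommon _)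
    · intro h
      have h2 := congrFun h j2
      rw [hxvD (fun _ => true) j2 hj2D, hj2v] at h2
      simpa using h2
    · intro h
      have h2 := congrFun h j1
      rw [hxvD (fun _ => true) j1 hj1D, hj1v'] at h2
      simpa using h2
  · -- there is a critical row, hence `D` has at least 3 elements
    push_neg at hcrit
    obtain ⟨t0, ht0⟩ := hcrit
    have hSSsubD : ∀ t, SS t ⊆ D := fun t jj hjj => (Finset.mem_filter.mp hjj).2.2
    have hk3 : 3 ≤ D.card := le_trans (card3 t0 ht0) (Finset.card_le_card (hSSsubD t0))
    have hcover : ∀ F : ℕ → Bool,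
        (∀ a, a < D.card → (F ((a+1) % D.card) ≠ F a ∨ F ((a+2) % D.card) ≠ F a)) →
        ∀ t, ∃ jj, A t jj = 1 ∧ xv (fun j => F (rnk D rfl j)) jj = 1 := by
      intro F hF t
      by_cases hct : ∃ jj, A t jj ≠ 0 ∧ v jj = 1 ∧ v' jj = 1
      · obtain ⟨jj, h0, h1, h1'⟩ := hct
        have hjj : jj ∉ D := fun h => (hmemD jj).mp h (h1.trans h1'.symm)
        refine ⟨jj, ?_, by rw [hxvnD (fun j => F (rnk D rfl j)) jj hjj, h1]⟩
        rcases hA t jj with h | h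
        · exact absurd h h0
        · exact h
      · push_neg at hct
        obtain ⟨ia, ja, harc⟩ := hcirc t
        have hchar : ∀ d ∈ D,
            (d ∈ SS t ↔ ((d - ia : Fin n) : ℕ) ≤ ((ja - ia : Fin n) : ℕ)) := by
          intro d hd
          rw [← mem_arc_iff]
          constructor
          · intro hdS
            have hA0 : A t d ≠ 0 := (Finset.mem_filter.mp hdS).2.1
            have hrs : d ∈ rowSupp A t := hA0
            rwa [harc] at hrs
          · intro hdarc
            have hrs : d ∈ rowSupp A t := by rw [harc]; exact hdarc
            exact Finset.mem_filter.mpr ⟨Finset.mem_univ d, hrs, hd⟩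
        obtain ⟨a, hak, ⟨da, hdaS, hdar⟩, ⟨db, hdbS, hdbr⟩, ⟨dc, hdcS, hdcr⟩⟩ :=
          triple_lemma D (SS t) rfl (hSSsubD t) ia ja hchar (card3 t hct)
        have hpick : ∀ d0 ∈ SS t, F (rnk D rfl d0) = true →
            ∃ jj, A t jj = 1 ∧ xv (fun j => F (rnk D rfl j)) jj = 1 := by
          intro d0 hd0 hcol
          obtain ⟨-, hA0, hd0D⟩ := Finset.mem_filter.mp hd0
          refine ⟨d0, ?_, ?_⟩
          · rcases hA t d0 with h | h
            · exact absurd h hA0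
            · exact h
          · rw [hxvD (fun j => F (rnk D rfl j)) d0 hd0D]
            simp [hcol]
        cases hFa : F a with
        | true => exact hpick da hdaS (by rw [hdar, hFa])
        | false =>
          rcases hF a hak with hd | hd
          · apply hpick db hdbS
            rw [hdbr]
            cases h2 : F ((a+1) % D.card)
            · rw [h2, hFa] at hd; exact absurd rfl hd
            · rfl
          · apply hpick dc hdcS
            rw [hdcr]
            cases h2 : F ((a+2) % D.card)
            · rw [h2, hFa] at hd; exact absurd rfl hd
            · rfl
    have hFp : ∀ a, a < D.card →
        (Fpar ((a+1) % D.card) ≠ Fpar a ∨ Fpar ((a+2) % D.card) ≠ Fpar a) :=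
      fun a ha => Fpar_good (by omega) ha
    have hGp : ∀ a, a < D.card →
        (Gpar ((a+1) % D.card) ≠ Gpar a ∨ Gpar ((a+2) % D.card) ≠ Gpar a) :=
      fun a ha => Gpar_good hk3 ha
    have hneg : ∀ F : ℕ → Bool,
        (∀ a, a < D.card → (F ((a+1) % D.card) ≠ F a ∨ F ((a+2) % D.card) ≠ F a)) →
        (∀ a, a < D.card → ((fun r => !(F r)) ((a+1) % D.card) ≠ (fun r => !(F r)) a ∨
          (fun r => !(F r)) ((a+2) % D.card) ≠ (fun r => !(F r)) a)) := by
      intro F hF a ha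
      rcases hF a ha with h | h
      · exact Or.inl (fun hc => h (Bool.not_inj hc))
      · exact Or.inr (fun hc => h (Bool.not_inj hc))
    obtain ⟨d0, hd0D, hd0r⟩ := rnk_surj D rfl (show 0 < D.card by omega)
    obtain ⟨d2, hd2D, hd2r⟩ := rnk_surj D rfl (show 2 < D.card by omega)
    have hxF0 : xv (fun j => Fpar (rnk D rfl j)) d0 = 1 := by
      rw [hxvD (fun j => Fpar (rnk D rfl j)) d0 hd0D]
      simp only [hd0r]
      norm_num [Fpar]
    have hxF2 : xv (fun j => Fpar (rnk D rfl j)) d2 = 1 := by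
      rw [hxvD (fun j => Fpar (rnk D rfl j)) d2 hd2D]
      simp only [hd2r]
      norm_num [Fpar]
    have hxG0 : xv (fun j => Gpar (rnk D rfl j)) d0 = 0 := by
      rw [hxvD (fun j => Gpar (rnk D rfl j)) d0 hd0D]
      simp only [hd0r]
      norm_num [Gpar]
    have hxG2 : xv (fun j => Gpar (rnk D rfl j)) d2 = 1 := by
      rw [hxvD (fun j => Gpar (rnk D rfl j)) d2 hd2D]
      simp only [hd2r]
      norm_num [Gpar, Fpar]
    by_cases hxF : xv (fun j => Fpar (rnk D rfl j)) = v ∨ xv (fun j => Fpar (rnk D rfl j)) = v'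
    · apply construct (fun j => Gpar (rnk D rfl j)) (hcover Gpar hGp)
        (hcover (fun r => !(Gpar r)) (hneg Gpar hGp))
      · -- xv Gpar ≠ v
        intro h
        rcases hxF with hxv | hxv'
        · -- v d0 = 1 but xv Gpar d0 = 0
          have h1 : v d0 = 1 := by rw [← congrFun hxv d0, hxF0]
          have := congrFun h d0
          rw [hxG0, h1] at this
          norm_num at this
        · -- v' d2 = 1 so v d2 = 0, but xv Gpar d2 = 1
          have h1 : v' d2 = 1 := by rw [← congrFun hxv' d2, hxF2]
          have h2 : v d2 = 0 := by
            rcases hDvals d2 hd2D with ⟨-, hb⟩ | ⟨hb, -⟩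
            · rw [h1] at hb; norm_num at hb
            · exact hb
          have := congrFun h d2
          rw [hxG2, h2] at this
          norm_num at this
      · -- xv Gpar ≠ v'
        intro h
        rcases hxF with hxv | hxv'
        · -- v d2 = 1 so v' d2 = 0, but xv Gpar d2 = 1
          have h1 : v d2 = 1 := by rw [← congrFun hxv d2, hxF2]
          have h2 : v' d2 = 0 := by
            rcases hDvals d2 hd2D with ⟨-, hb⟩ | ⟨hb, -⟩
            · exact hb
            · rw [h1] at hb; norm_num at hb
          have := congrFun h d2
          rw [hxG2, h2] at this
          norm_num at this
        · -- v' d0 = 1 but xv Gpar d0 = 0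
          have h1 : v' d0 = 1 := by rw [← congrFun hxv' d0, hxF0]
          have := congrFun h d0
          rw [hxG0, h1] at this
          norm_num at this
    · push_neg at hxF
      exact construct (fun j => Fpar (rnk D rfl j)) (hcover Fpar hFp)
        (hcover (fun r => !(Fpar r)) (hneg Fpar hFp)) hxF.1 hxF.2
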